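/- arXiv:0902.4895 — 2 statements merged into one kernel-verified Lean document; each statement's English description precedes it below -/
import Mathlib

section
/- Let A = (a_n)_{n∈ℕ} be a sequence of integers. Suppose that (a) there exists s ∈ ℕ such that the s-fold sumset sA = { a_{n_1} + a_{n_2} + ... + a_{n_s} : n_1, ..., n_s ∈ ℕ } has bounded gaps, i.e., there exist g ∈ ℕ and m_0 such that every interval [m, m+g] with m ≥ m_0 contains an element of sA; and (b) gcd{ a_n − a_1 : n ∈ ℕ } = 1. Then A is an asymptotic basis: there exist t ∈ ℕ and N_0 such that every integer N ≥ N_0 can be written as a_{n_1} + a_{n_2} + ... + a_{n_t} for some indices n_1, ..., n_t ∈ ℕ (repetitions allowed). -/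
private lemma sum_get_eq (a : ℕ → ℤ) : ∀ (L : List ℕ),
    ∑ i : Fin L.length, a (L.get i) = (L.map a).sum := by
  intro L
  induction L with
  | nil => simp
  | cons x xs ih => simpa [Fin.sum_univ_succ] using ih

private lemma split_list (S : Set ℤ) : ∀ (l : List ℤ), (∀ y ∈ l, y ∈ S ∪ -S) →
    ∃ l1 l2 : List ℤ, (∀ y ∈ l1, y ∈ S) ∧ (∀ y ∈ l2, y ∈ S) ∧
      l1.sum - l2.sum = l.sum := by
  intro l
  induction l with
  | nil => exact fun _ => ⟨[], [], by simp, by simp, by simp⟩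
  | cons x xs ih =>
    intro h
    obtain ⟨l1, l2, h1, h2, h3⟩ := ih (fun y hy => h y (List.mem_cons_of_mem _ hy))
    rcases h x List.mem_cons_self with hx | hx
    · refine ⟨x :: l1, l2, ?_, h2, ?_⟩
      · intro y hy
        rcases List.mem_cons.mp hy with rfl | hy
        · exact hx
        · exact h1 y hy
      · simp only [List.sum_cons]; linarith
    · refine ⟨l1, (-x) :: l2, h1, ?_, ?_⟩
      · intro y hy
        rcases List.mem_cons.mp hy with rfl | hy
        · exact Set.mem_neg.mp hx
        · exact h2 y hy
      · simp only [List.sum_cons]; linarith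

private lemma lift_list (d : ℕ → ℤ) : ∀ (l : List ℤ), (∀ y ∈ l, y ∈ Set.range d) →
    ∃ M : List ℕ, M.map d = l := by
  intro l
  induction l with
  | nil => exact fun _ => ⟨[], rfl⟩
  | cons x xs ih =>
    intro h
    obtain ⟨M, hM⟩ := ih (fun y hy => h y (List.mem_cons_of_mem _ hy))
    obtain ⟨n, hn⟩ := h x List.mem_cons_self
    exact ⟨n :: M, by simp [hM, hn]⟩

private lemma rep_list (d : ℕ → ℤ) (M : List ℕ) : ∀ (k : ℕ),
    ∃ l : List ℕ, l.length = k * M.length ∧ (l.map d).sum = k * (M.map d).sum := by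
  intro k
  induction k with
  | zero => exact ⟨[], by simp, by simp⟩
  | succ k ih =>
    obtain ⟨l, h1, h2⟩ := ih
    refine ⟨M ++ l, ?_, ?_⟩
    · simp [h1, Nat.succ_mul]; ring
    · simp [h2]; push_cast; ring

private lemma map_sum_eq (a : ℕ → ℤ) : ∀ (l : List ℕ),
    (l.map a).sum = (l.map (fun n => a n - a 1)).sum + l.length * a 1 := by
  intro l
  induction l with
  | nil => simp
  | cons x xs ih => simp [ih]; push_cast; ring

/-- Erdős–Graham / Nash–Nathanson type lemma: if some `s`-fold sumset of an
integer sequence has bounded gaps and the differences `a n - a 1` have gcd 1,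
then the sequence is an asymptotic basis. -/
theorem stmt_0 (a : ℕ → ℤ)
    (hgaps : ∃ s : ℕ, ∃ g : ℕ, ∃ m₀ : ℤ, ∀ m : ℤ, m ≥ m₀ →
      ∃ n : Fin s → ℕ, m ≤ ∑ i, a (n i) ∧ ∑ i, a (n i) ≤ m + g)
    (hgcd : ∀ d : ℤ, (∀ n : ℕ, d ∣ a n - a 1) → IsUnit d) :
    ∃ t : ℕ, ∃ N₀ : ℤ, ∀ N : ℤ, N ≥ N₀ →
      ∃ n : Fin t → ℕ, ∑ i, a (n i) = N := by
  obtain ⟨s, g, m₀, hs⟩ := hgaps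
  set d : ℕ → ℤ := fun n => a n - a 1 with hd
  -- 1 is in the subgroup generated by the differences
  have h1 : (1 : ℤ) ∈ AddSubgroup.closure (Set.range d) := by
    obtain ⟨c, hc⟩ := Int.subgroup_cyclic (AddSubgroup.closure (Set.range d))
    have hdvd : ∀ n, c ∣ d n := by
      intro n
      have hm : d n ∈ AddSubgroup.closure (Set.range d) :=
        AddSubgroup.subset_closure ⟨n, rfl⟩
      rw [hc, AddSubgroup.mem_closure_singleton] at hm
      obtain ⟨m, hm⟩ := hm
      exact ⟨m, by rw [← hm]; simp [mul_comm]⟩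
    have hu := hgcd c hdvd
    rw [hc, AddSubgroup.mem_closure_singleton]
    refine ⟨c, ?_⟩
    rcases Int.isUnit_iff.mp hu with h | h <;> rw [h] <;> norm_num
  rw [← AddSubgroup.mem_toAddSubmonoid, AddSubgroup.closure_toAddSubmonoid] at h1
  obtain ⟨l, hl, hlsum⟩ := AddSubmonoid.exists_list_of_mem_closure h1
  obtain ⟨l1, l2, hl1, hl2, hsub⟩ := split_list (Set.range d) l hl
  obtain ⟨M1, hM1⟩ := lift_list d l1 hl1
  obtain ⟨M2, hM2⟩ := lift_list d l2 hl2
  set p := M1.length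
  set q := M2.length
  set Q : ℤ := (M2.map d).sum with hQ
  have hPQ : (M1.map d).sum = Q + 1 := by
    rw [hM1, hQ, hM2]; linarith [hsub, hlsum]
  set K := g * (p + q) with hK
  -- For each j ≤ g there is a list of length K with difference-sum g*Q + j
  have key : ∀ j : ℕ, j ≤ g → ∃ l : List ℕ, l.length = K ∧
      (l.map d).sum = g * Q + j := by
    intro j hj
    obtain ⟨lA, hA1, hA2⟩ := rep_list d M1 j
    obtain ⟨lB, hB1, hB2⟩ := rep_list d M2 (g - j)
    have hle : j * p + (g - j) * q ≤ g * p + g * q :=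
      add_le_add (Nat.mul_le_mul_right _ hj) (Nat.mul_le_mul_right _ (Nat.sub_le _ _))
    refine ⟨lA ++ lB ++ List.replicate (g * p + g * q - (j * p + (g - j) * q)) 1, ?_, ?_⟩
    · have hgpq : K = g * p + g * q := by rw [hK]; ring
      have e1 : lA.length = j * p := hA1
      have e2 : lB.length = (g - j) * q := hB1
      simp only [List.length_append, List.length_replicate, e1, e2, hgpq]
      omega
    · have hd1 : d 1 = 0 := by simp [hd]
      simp [hA2, hB2, hd1, hPQ]
      have hcast : ((g - j : ℕ) : ℤ) = (g : ℤ) - j := by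
        push_cast [hj]; ring
      rw [hcast]; ring
  refine ⟨s + K, m₀ + K * a 1 + g * Q + g, ?_⟩
  intro N hN
  obtain ⟨n, hn1, hn2⟩ := hs (N - (K * a 1 + g * Q + g)) (by linarith)
  set Ssum := ∑ i, a (n i) with hSsum
  have hj0 : 0 ≤ N - Ssum - K * a 1 - g * Q := by linarith
  have hjg : N - Ssum - K * a 1 - g * Q ≤ g := by linarith
  set j : ℕ := (N - Ssum - K * a 1 - g * Q).toNat with hj
  have hjcast : (j : ℤ) = N - Ssum - K * a 1 - g * Q := Int.toNat_of_nonneg hj0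
  have hjle : j ≤ g := by
    have h' : (j : ℤ) ≤ (g : ℤ) := by rw [hjcast]; exact hjg
    exact_mod_cast h'
  obtain ⟨L, hLlen, hLsum⟩ := key j hjle
  have hLa : (L.map a).sum = N - Ssum := by
    rw [map_sum_eq a L, hLsum, hLlen, hjcast]
    push_cast
    ring
  refine ⟨Fin.append n (fun i => L.get (Fin.cast hLlen.symm i)), ?_⟩
  rw [Fin.sum_univ_add]
  have h2' : ∑ i : Fin K, a (L.get (Fin.cast hLlen.symm i)) = (L.map a).sum := by
    rw [← sum_get_eq a L]
    exact Fintype.sum_equiv (finCongr hLlen.symm) _ _ (fun i => rfl)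
  simp only [Fin.append_left, Fin.append_right]
  rw [h2', hLa, ← hSsum]
  ring
end

section
/- Let f : ℕ → ℝ be a function such that for every positive integer q the sequence of fractional parts ({ f(n)/q })_{n∈ℕ} is dense in [0, 1). Then for every positive integer q and every integer a there exists n ∈ ℕ with ⌊f(n)⌋ ≡ a (mod q). Consequently, gcd{ ⌊f(n)⌋ − ⌊f(1)⌋ : n ∈ ℕ } = 1. -/
lemma key_lemma (f : ℕ → ℝ)
    (hdense : ∀ q : ℕ, 0 < q → ∀ x ∈ Set.Ico (0 : ℝ) 1, ∀ ε : ℝ, 0 < ε →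
      ∃ n : ℕ, |Int.fract (f n / q) - x| < ε) :
    ∀ q : ℕ, 0 < q → ∀ a : ℤ, ∃ n : ℕ, ⌊f n⌋ ≡ a [ZMOD (q : ℤ)] := by
  intro q hq a
  set r : ℤ := a % q with hr
  have hqZ : (0:ℤ) < (q:ℤ) := by exact_mod_cast hq
  have hr0 : 0 ≤ r := Int.emod_nonneg a (by omega)
  have hrq : r < q := Int.emod_lt_of_pos a hqZ
  have hqR : (0:ℝ) < (q:ℝ) := by exact_mod_cast hq
  have hrR : (0:ℝ) ≤ (r:ℝ) := by exact_mod_cast hr0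
  have hrqR : (r:ℝ) + 1 ≤ (q:ℝ) := by exact_mod_cast hrq
  have hx : ((r:ℝ) + 1/2) / q ∈ Set.Ico (0:ℝ) 1 := by
    constructor
    · positivity
    · rw [div_lt_one hqR]; linarith
  obtain ⟨n, hn⟩ := hdense q hq _ hx (1/(2*q)) (by positivity)
  refine ⟨n, ?_⟩
  set t : ℝ := Int.fract (f n / q) with ht
  have h1 : (r:ℝ) < q * t := by
    have : ((r:ℝ) + 1/2) / q - 1/(2*q) < t := by
      have := abs_lt.mp hn; linarith [this.1]
    have h2 : ((r:ℝ) + 1/2) / q - 1/(2*q) = r / q := by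
      field_simp; ring
    rw [h2] at this
    calc (r:ℝ) = q * (r / q) := by field_simp
    _ < q * t := by exact (mul_lt_mul_iff_right₀ hqR).mpr this
  have h2 : q * t < (r:ℝ) + 1 := by
    have : t < ((r:ℝ) + 1/2) / q + 1/(2*q) := by
      have := abs_lt.mp hn; linarith [this.2]
    have h3 : ((r:ℝ) + 1/2) / q + 1/(2*q) = ((r:ℝ) + 1) / q := by
      field_simp; ring
    rw [h3] at this
    calc (q:ℝ) * t < q * (((r:ℝ)+1)/q) := (mul_lt_mul_iff_right₀ hqR).mpr this
    _ = (r:ℝ) + 1 := by field_simp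
  have hfloor : ⌊(q:ℝ) * t⌋ = r := by
    rw [Int.floor_eq_iff]
    exact ⟨le_of_lt h1, h2⟩
  obtain ⟨k, hk⟩ : ∃ k : ℤ, k = ⌊f n / q⌋ := ⟨_, rfl⟩
  have hfn : f n = (q:ℝ) * t + ((q:ℤ) * k : ℤ) := by
    have h5 : f n / q = k + t := by rw [ht, hk, Int.floor_add_fract]
    push_cast
    field_simp at h5 ⊢
    linarith [h5]
  have hfloor2 : ⌊f n⌋ = q * k + a % q := by
    rw [hfn, Int.floor_add_intCast, hfloor, hr]; ring
  show ⌊f n⌋ % (q:ℤ) = a % (q:ℤ)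
  rw [hfloor2, add_comm, Int.add_mul_emod_self_left, Int.emod_emod_of_dvd a dvd_rfl]

/-- If the fractional parts of `f n / q` are dense in `[0,1)` for every positive
integer `q`, then `⌊f n⌋` hits every residue class modulo every `q`, and the
gcd of the differences `⌊f n⌋ - ⌊f 1⌋` is `1`. -/
theorem stmt_2 (f : ℕ → ℝ)
    (hdense : ∀ q : ℕ, 0 < q → ∀ x ∈ Set.Ico (0 : ℝ) 1, ∀ ε : ℝ, 0 < ε →
      ∃ n : ℕ, |Int.fract (f n / q) - x| < ε) :
    (∀ q : ℕ, 0 < q → ∀ a : ℤ, ∃ n : ℕ, ⌊f n⌋ ≡ a [ZMOD (q : ℤ)]) ∧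
    (∀ d : ℤ, (∀ n : ℕ, d ∣ ⌊f n⌋ - ⌊f 1⌋) → IsUnit d) := by
  refine ⟨key_lemma f hdense, ?_⟩
  intro d hd
  by_cases hd0 : d = 0
  · obtain ⟨n, hn⟩ := key_lemma f hdense 2 (by omega) (⌊f 1⌋ + 1)
    have h1 : ⌊f n⌋ - ⌊f 1⌋ = 0 := by
      have := hd n; rw [hd0] at this; exact (zero_dvd_iff.mp this)
    have h2 : ⌊f n⌋ % 2 = (⌊f 1⌋ + 1) % 2 := hn
    omega
  · obtain ⟨n, hn⟩ := key_lemma f hdense d.natAbs (Int.natAbs_pos.mpr hd0) (⌊f 1⌋ + 1)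
    have h1 : |d| ∣ ⌊f n⌋ - ⌊f 1⌋ := (abs_dvd d _).mpr (hd n)
    have h2 : |d| ∣ ⌊f n⌋ - (⌊f 1⌋ + 1) := by
      have := Int.ModEq.dvd hn
      rwa [show (⌊f 1⌋ + 1) - ⌊f n⌋ = -(⌊f n⌋ - (⌊f 1⌋ + 1)) by ring,
        dvd_neg, ← Int.abs_eq_natAbs] at this
    have h3 : |d| ∣ 1 := by
      have := dvd_sub h1 h2
      simpa using this
    rw [Int.isUnit_iff]
    have habs : |d| = 1 := Int.eq_one_of_dvd_one (abs_nonneg d) h3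
    exact (abs_eq (by norm_num : (0:ℤ) ≤ 1)).mp habs
end
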